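/- Let μ be a probability measure on a measurable space Ω and let f : Ω → ℝ be measurable with f(ω) > 0 μ-almost everywhere, such that for some ε > 0, ∫ (f^ε + f^{−ε}) dμ < ∞, and set γ̄ = ∫ f dμ, assumed to satisfy γ̄ > 0. Define AF(k) = (∫ f^k dμ)/γ̄^k − 1 for k ∈ (−ε, ε). Then ∫ log f(ω) dμ(ω) = log γ̄ + AF′(0), where AF′(0) is the derivative of AF at k = 0. -/

import Mathlib

open MeasureTheory

lemma aux_rpow_le {x : ℝ} (hx : 0 < x) {ε a : ℝ} (ha : |a| ≤ ε) :
    x ^ a ≤ x ^ ε + x ^ (-ε) := by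
  obtain ⟨ha1, ha2⟩ := abs_le.mp ha
  rcases le_or_gt 1 x with h1 | h1
  · have := Real.rpow_le_rpow_of_exponent_le h1 ha2
    have h2 : (0:ℝ) ≤ x ^ (-ε) := (Real.rpow_pos_of_pos hx _).le
    linarith
  · have := Real.rpow_le_rpow_of_exponent_ge hx h1.le ha1
    have h2 : (0:ℝ) ≤ x ^ ε := (Real.rpow_pos_of_pos hx _).le
    linarith

lemma aux_bound {x : ℝ} (hx : 0 < x) {ε k : ℝ} (hε : 0 < ε) (hk : |k| < ε / 2) :
    |x ^ k * Real.log x| ≤ 4 / ε * (x ^ ε + x ^ (-ε)) := by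
  have hδ : 0 < ε / 2 := by linarith
  have hlog1 : Real.log x ≤ 2 / ε * x ^ (ε / 2) := by
    have h1 : Real.log (x ^ (ε / 2)) ≤ x ^ (ε / 2) - 1 :=
      Real.log_le_sub_one_of_pos (Real.rpow_pos_of_pos hx _)
    rw [Real.log_rpow hx] at h1
    have hxp : (0:ℝ) < x ^ (ε / 2) := Real.rpow_pos_of_pos hx _
    rw [div_mul_eq_mul_div, le_div_iff₀ hε]
    nlinarith
  have hlog2 : -Real.log x ≤ 2 / ε * x ^ (-(ε / 2)) := by
    have h1 : Real.log (x ^ (-(ε / 2))) ≤ x ^ (-(ε / 2)) - 1 :=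
      Real.log_le_sub_one_of_pos (Real.rpow_pos_of_pos hx _)
    rw [Real.log_rpow hx] at h1
    have hxp : (0:ℝ) < x ^ (-(ε / 2)) := Real.rpow_pos_of_pos hx _
    rw [div_mul_eq_mul_div, le_div_iff₀ hε]
    nlinarith
  have hlog : |Real.log x| ≤ 2 / ε * (x ^ (ε / 2) + x ^ (-(ε / 2))) := by
    have p1 : (0:ℝ) ≤ x ^ (ε / 2) := (Real.rpow_pos_of_pos hx _).le
    have p2 : (0:ℝ) ≤ x ^ (-(ε / 2)) := (Real.rpow_pos_of_pos hx _).le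
    have h2ε : (0:ℝ) ≤ 2 / ε := by positivity
    rw [abs_le]
    constructor
    · nlinarith
    · nlinarith
  have hxk : (0:ℝ) ≤ x ^ k := (Real.rpow_pos_of_pos hx _).le
  have key : |x ^ k * Real.log x| ≤ 2 / ε * (x ^ (k + ε / 2) + x ^ (k - ε / 2)) := by
    rw [abs_mul, abs_of_nonneg hxk]
    calc x ^ k * |Real.log x| ≤ x ^ k * (2 / ε * (x ^ (ε / 2) + x ^ (-(ε / 2)))) :=
          mul_le_mul_of_nonneg_left hlog hxk
      _ = 2 / ε * (x ^ (k + ε / 2) + x ^ (k - ε / 2)) := by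
          rw [Real.rpow_add hx, sub_eq_add_neg, Real.rpow_add hx]
          ring
  have e1 : x ^ (k + ε / 2) ≤ x ^ ε + x ^ (-ε) := by
    apply aux_rpow_le hx
    rw [abs_le]
    obtain ⟨h1, h2⟩ := abs_lt.mp hk
    constructor <;> linarith
  have e2 : x ^ (k - ε / 2) ≤ x ^ ε + x ^ (-ε) := by
    apply aux_rpow_le hx
    rw [abs_le]
    obtain ⟨h1, h2⟩ := abs_lt.mp hk
    constructor <;> linarith
  have h2ε : (0:ℝ) ≤ 2 / ε := by positivity
  calc |x ^ k * Real.log x| ≤ 2 / ε * (x ^ (k + ε / 2) + x ^ (k - ε / 2)) := key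
    _ ≤ 2 / ε * ((x ^ ε + x ^ (-ε)) + (x ^ ε + x ^ (-ε))) := by nlinarith
    _ = 4 / ε * (x ^ ε + x ^ (-ε)) := by ring

/-- Exact identity underlying the paper's Theorem 3: with `γ̄ = ∫ f dμ > 0` and
amount-of-fading function `AF(k) = (∫ f^k dμ)/γ̄^k - 1`, one has
`∫ log f dμ = log γ̄ + AF′(0)`. -/
theorem acc_high_snr_amount_of_fading {Ω : Type*} [MeasurableSpace Ω]
    (μ : Measure Ω) [IsProbabilityMeasure μ] (f : Ω → ℝ) (hf : Measurable f)
    (hf0 : ∀ᵐ ω ∂μ, 0 < f ω) (ε : ℝ) (hε : 0 < ε)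
    (hint : Integrable (fun ω => f ω ^ ε + f ω ^ (-ε)) μ)
    (γbar : ℝ) (hγbar : γbar = ∫ ω, f ω ∂μ) (hγbarpos : 0 < γbar)
    (AF : ℝ → ℝ) (hAF : ∀ k : ℝ, AF k = (∫ ω, f ω ^ k ∂μ) / γbar ^ k - 1) :
    ∫ ω, Real.log (f ω) ∂μ = Real.log γbar + deriv AF 0 := by
  set F : ℝ → Ω → ℝ := fun k ω => f ω ^ k with hF
  set F' : ℝ → Ω → ℝ := fun k ω => f ω ^ k * Real.log (f ω) with hF'
  have hmain :
      Integrable (F' 0) μ ∧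
        HasDerivAt (fun k => ∫ ω, F k ω ∂μ) (∫ ω, F' 0 ω ∂μ) 0 := by
    apply hasDerivAt_integral_of_dominated_loc_of_deriv_le
      (bound := fun ω => 4 / ε * (f ω ^ ε + f ω ^ (-ε))) (Metric.ball_mem_nhds 0 (by positivity : (0:ℝ) < ε / 2))
    · refine Filter.Eventually.of_forall fun k => Measurable.aestronglyMeasurable ?_
      measurability
    · simp only [hF, Real.rpow_zero]
      exact integrable_const 1
    · refine Measurable.aestronglyMeasurable ?_
      measurability
    · filter_upwards [hf0] with ω hω k hk
      rw [Metric.mem_ball, Real.dist_eq, sub_zero] at hk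
      exact (aux_bound hω hε hk)
    · exact hint.const_mul _
    · filter_upwards [hf0] with ω hω k _
      exact (Real.hasStrictDerivAt_const_rpow hω k).hasDerivAt
  obtain ⟨hint', hM⟩ := hmain
  have hM0 : (∫ ω, F 0 ω ∂μ) = 1 := by
    simp [hF, Real.rpow_zero]
  have hF'0 : (∫ ω, F' 0 ω ∂μ) = ∫ ω, Real.log (f ω) ∂μ := by
    simp [hF', Real.rpow_zero]
  have hg : HasDerivAt (fun k : ℝ => γbar ^ k) (γbar ^ (0:ℝ) * Real.log γbar) 0 :=
    (Real.hasStrictDerivAt_const_rpow hγbarpos 0).hasDerivAt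
  have hne : (γbar : ℝ) ^ (0:ℝ) ≠ 0 := by
    simp
  have hdiv := (hM.div hg hne).sub_const 1
  have hAFfun : AF = fun k => (∫ ω, F k ω ∂μ) / γbar ^ k - 1 := funext hAF
  rw [hAFfun]
  rw [show (fun k => (∫ ω, F k ω ∂μ) / γbar ^ k - 1) = fun x => ((fun k => ∫ ω, F k ω ∂μ) / fun k : ℝ => γbar ^ k) x - 1 from rfl, hdiv.deriv]
  rw [hM0, hF'0] at *
  simp only [Real.rpow_zero]
  ring
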